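/- Let 0 < q₁ < p₁ ≤ 1, 0 < q₂ < p₂ ≤ 1, let n, m ≥ 1, and let f : [0,1]² → ℝ be continuous. Then for every (x,y) ∈ [0,1]², |B_{n,m}(f;x,y) - f(x,y)| ≤ 2 ω(f, δ_{n,m}(x,y)), where δ_{n,m}(x,y) = √( (p₁^{n-1}/[n]_{p₁,q₁})(x - x²) + (p₂^{m-1}/[m]_{p₂,q₂})(y - y²) ). -/

import Mathlib

open Finset Set Filter Topology

/-- The (p,q)-integer `[n]_{p,q} = ∑_{i=0}^{n-1} p^(n-1-i) q^i`. -/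
noncomputable def pqInt (p q : ℝ) (n : ℕ) : ℝ :=
  ∑ i ∈ Finset.range n, p ^ (n - 1 - i) * q ^ i

/-- The (p,q)-factorial `[n]_{p,q}! = ∏_{j=1}^n [j]_{p,q}`. -/
noncomputable def pqFactorial (p q : ℝ) (n : ℕ) : ℝ :=
  ∏ j ∈ Finset.range n, pqInt p q (j + 1)

/-- The (p,q)-binomial coefficient. -/
noncomputable def pqChoose (p q : ℝ) (n k : ℕ) : ℝ :=
  pqFactorial p q n / (pqFactorial p q k * pqFactorial p q (n - k))

/-- The node `p^(n-k) [k]_{p,q} / [n]_{p,q}` of the (p,q)-Bernstein operator. -/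
noncomputable def pqNode (p q : ℝ) (n k : ℕ) : ℝ :=
  p ^ (n - k) * pqInt p q k / pqInt p q n

/-- The basis function
`p^((k(k-1)-n(n-1))/2) C(n,k)_{p,q} x^k ∏_{s=0}^{n-k-1} (p^s - q^s x)`,
where `p^((k(k-1)-n(n-1))/2)` is written as `p^(k(k-1)/2) / p^(n(n-1)/2)`. -/
noncomputable def pqBasis (p q : ℝ) (n k : ℕ) (x : ℝ) : ℝ :=
  (p ^ (k.choose 2) / p ^ (n.choose 2)) * pqChoose p q n k * x ^ k *
    ∏ s ∈ Finset.range (n - k), (p ^ s - q ^ s * x)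

/-- The (p,q)-Bernstein operator `B_{n,p,q}(f;x)`. -/
noncomputable def pqBernstein (p q : ℝ) (n : ℕ) (f : ℝ → ℝ) (x : ℝ) : ℝ :=
  ∑ k ∈ Finset.range (n + 1), pqBasis p q n k x * f (pqNode p q n k)

/-- The bivariate (p,q)-Bernstein operator
`B_{n,m}^{(p₁,q₁),(p₂,q₂)}(f;x,y)`. -/
noncomputable def pqBernstein2 (p₁ q₁ p₂ q₂ : ℝ) (n m : ℕ)
    (f : ℝ → ℝ → ℝ) (x y : ℝ) : ℝ :=
  ∑ k ∈ Finset.range (n + 1), ∑ j ∈ Finset.range (m + 1),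
    pqBasis p₁ q₁ n k x * pqBasis p₂ q₂ m j y *
      f (pqNode p₁ q₁ n k) (pqNode p₂ q₂ m j)

/-- The complete modulus of continuity of a bivariate function on `[0,1]²`. -/
noncomputable def completeModulus (f : ℝ → ℝ → ℝ) (δ : ℝ) : ℝ :=
  sSup {d : ℝ | ∃ t ∈ Set.Icc (0 : ℝ) 1, ∃ s ∈ Set.Icc (0 : ℝ) 1,
    ∃ x ∈ Set.Icc (0 : ℝ) 1, ∃ y ∈ Set.Icc (0 : ℝ) 1,
    Real.sqrt ((t - x) ^ 2 + (s - y) ^ 2) ≤ δ ∧ d = |f t s - f x y|}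

lemma pqInt_one_eq (q : ℝ) (n : ℕ) : pqInt 1 q n = ∑ i ∈ Finset.range n, q ^ i := by
  simp [pqInt]

lemma pqInt_one_pos {q : ℝ} (hq : 0 < q) {n : ℕ} (hn : 0 < n) : 0 < pqInt 1 q n := by
  rw [pqInt_one_eq]
  exact Finset.sum_pos (fun i _ => pow_pos hq i) (by simp [Finset.nonempty_range_iff]; omega)

lemma pqInt_one_succ (q : ℝ) (n : ℕ) : pqInt 1 q (n + 1) = pqInt 1 q n + q ^ n := by
  simp [pqInt_one_eq, Finset.sum_range_succ]

lemma pqInt_one_add (q : ℝ) (a b : ℕ) :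
    pqInt 1 q (a + b) = pqInt 1 q a + q ^ a * pqInt 1 q b := by
  induction b with
  | zero => simp [pqInt]
  | succ b ih =>
    rw [← Nat.add_assoc, pqInt_one_succ, ih, pqInt_one_succ]
    ring

lemma pqFactorial_succ (p q : ℝ) (n : ℕ) :
    pqFactorial p q (n + 1) = pqFactorial p q n * pqInt p q (n + 1) := by
  simp [pqFactorial, Finset.prod_range_succ]

lemma pqFactorial_zero (p q : ℝ) : pqFactorial p q 0 = 1 := by simp [pqFactorial]

lemma pqFactorial_one_pos {q : ℝ} (hq : 0 < q) (n : ℕ) : 0 < pqFactorial 1 q n := by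
  induction n with
  | zero => simp [pqFactorial_zero]
  | succ n ih => rw [pqFactorial_succ]; exact mul_pos ih (pqInt_one_pos hq n.succ_pos)

lemma pqChoose_one_pos {q : ℝ} (hq : 0 < q) (n k : ℕ) : 0 < pqChoose 1 q n k := by
  unfold pqChoose
  exact div_pos (pqFactorial_one_pos hq n) (mul_pos (pqFactorial_one_pos hq k) (pqFactorial_one_pos hq _))

lemma pqChoose_self (q : ℝ) (hq : 0 < q) (n : ℕ) : pqChoose 1 q n n = 1 := by
  unfold pqChoose
  rw [Nat.sub_self, pqFactorial_zero]
  rw [mul_one, div_self (pqFactorial_one_pos hq n).ne']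

lemma pqChoose_zero (q : ℝ) (hq : 0 < q) (n : ℕ) : pqChoose 1 q n 0 = 1 := by
  unfold pqChoose
  rw [Nat.sub_zero, pqFactorial_zero]
  rw [one_mul, div_self (pqFactorial_one_pos hq n).ne']

lemma pqChoose_succ_succ {q : ℝ} (hq : 0 < q) {n k : ℕ} (hk : k < n) :
    pqChoose 1 q (n+1) (k+1) = pqChoose 1 q n (k+1) + q^(n-k) * pqChoose 1 q n k := by
  have h1 : (n+1) - (k+1) = n - k := by omega
  have h2 : n - (k+1) = (n-k) - 1 := by omega
  have h3 : n - k = ((n-k)-1) + 1 := by omega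
  unfold pqChoose
  rw [h1, h2, pqFactorial_succ]
  have hint : pqInt 1 q (n+1) = pqInt 1 q (n-k) + q^(n-k) * pqInt 1 q (k+1) := by
    have h : (n - k) + (k+1) = n+1 := by omega
    rw [← h, pqInt_one_add]
  rw [hint]
  have hFnk : pqFactorial 1 q (n-k) = pqFactorial 1 q ((n-k)-1) * pqInt 1 q (n-k) := by
    conv_lhs => rw [h3]
    rw [pqFactorial_succ, ← h3]
  rw [hFnk, pqFactorial_succ 1 q k]
  have n1 := (pqFactorial_one_pos hq ((n-k)-1)).ne'
  have n2 := (pqFactorial_one_pos hq k).ne'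
  have n3 := (pqInt_one_pos hq (show 0 < n-k by omega)).ne'
  have n4 := (pqInt_one_pos hq (k.succ_pos)).ne'
  field_simp

lemma pqBasis_one (q : ℝ) (n k : ℕ) (x : ℝ) :
    pqBasis 1 q n k x = pqChoose 1 q n k * x^k * ∏ s ∈ Finset.range (n-k), (1 - q^s * x) := by
  simp [pqBasis]

lemma pqBasis_diag {q : ℝ} (hq : 0 < q) (n : ℕ) (x : ℝ) : pqBasis 1 q n n x = x ^ n := by
  simp [pqBasis_one, pqChoose_self q hq, Nat.sub_self]

lemma pqBasis_zero {q : ℝ} (hq : 0 < q) (n : ℕ) (x : ℝ) :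
    pqBasis 1 q (n+1) 0 x = (1 - q^n * x) * pqBasis 1 q n 0 x := by
  simp only [pqBasis_one, pqChoose_zero q hq, Nat.sub_zero, Finset.prod_range_succ]
  ring

lemma pqBasis_succ_succ {q : ℝ} (hq : 0 < q) {n k : ℕ} (hk : k < n) (x : ℝ) :
    pqBasis 1 q (n+1) (k+1) x
      = (1 - q^(n-k-1) * x) * pqBasis 1 q n (k+1) x
        + q^(n-k) * x * pqBasis 1 q n k x := by
  have h1 : (n+1) - (k+1) = n - k := by omega
  have h2 : n - (k+1) = (n-k) - 1 := by omega
  have h3 : n - k = ((n-k)-1) + 1 := by omega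
  simp only [pqBasis_one, pqChoose_succ_succ hq hk, h1, h2]
  conv_lhs => rw [h3, Finset.prod_range_succ]
  conv_rhs => rw [h3, Finset.prod_range_succ]
  rw [← h3]
  ring

lemma pqBasis_sum_one {q : ℝ} (hq : 0 < q) (n : ℕ) (x : ℝ) :
    ∑ k ∈ Finset.range (n+1), pqBasis 1 q n k x = 1 := by
  induction n with
  | zero => rw [Finset.sum_range_one, pqBasis_diag hq, pow_zero]
  | succ n ih =>
    have hrec : ∀ k ∈ Finset.range n, pqBasis 1 q (n+1) (k+1) x
        = (1 - q^(n-(k+1))*x) * pqBasis 1 q n (k+1) x + q^(n-k)*x * pqBasis 1 q n k x := by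
      intro k hk
      rw [pqBasis_succ_succ hq (Finset.mem_range.mp hk) x]
      have : n - k - 1 = n - (k+1) := by omega
      rw [this]
    calc ∑ k ∈ Finset.range (n+1+1), pqBasis 1 q (n+1) k x
        = (∑ k ∈ Finset.range n, pqBasis 1 q (n+1) (k+1) x) + pqBasis 1 q (n+1) 0 x
            + pqBasis 1 q (n+1) (n+1) x := by
          rw [Finset.sum_range_succ, Finset.sum_range_succ' (fun k => pqBasis 1 q (n+1) k x)]
      _ = (∑ k ∈ Finset.range n, ((1 - q^(n-(k+1))*x) * pqBasis 1 q n (k+1) x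
              + q^(n-k)*x * pqBasis 1 q n k x))
            + (1 - q^n * x) * pqBasis 1 q n 0 x + x * x^n := by
          rw [Finset.sum_congr rfl hrec, pqBasis_zero hq, pqBasis_diag hq (n+1), pow_succ]
          ring
      _ = ((∑ k ∈ Finset.range n, (1 - q^(n-(k+1))*x) * pqBasis 1 q n (k+1) x)
              + (1 - q^(n-0)*x) * pqBasis 1 q n 0 x)
            + ((∑ k ∈ Finset.range n, q^(n-k)*x * pqBasis 1 q n k x)
              + q^(n-n)*x * pqBasis 1 q n n x) := by
          rw [Finset.sum_add_distrib, pqBasis_diag hq n, Nat.sub_self, Nat.sub_zero, pow_zero]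
          ring
      _ = (∑ j ∈ Finset.range (n+1), (1 - q^(n-j)*x) * pqBasis 1 q n j x)
            + ∑ j ∈ Finset.range (n+1), q^(n-j)*x * pqBasis 1 q n j x := by
          rw [← Finset.sum_range_succ' (fun j => (1 - q^(n-j)*x) * pqBasis 1 q n j x),
            ← Finset.sum_range_succ (fun j => q^(n-j)*x * pqBasis 1 q n j x)]
      _ = ∑ j ∈ Finset.range (n+1), pqBasis 1 q n j x := by
          rw [← Finset.sum_add_distrib]
          exact Finset.sum_congr rfl (fun j _ => by ring)
      _ = 1 := ih

lemma pqBasis_mul_int {q : ℝ} (hq : 0 < q) {n k : ℕ} (hk : k ≤ n) (x : ℝ) :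
    pqBasis 1 q (n+1) (k+1) x * pqInt 1 q (k+1)
      = pqInt 1 q (n+1) * x * pqBasis 1 q n k x := by
  have h1 : (n+1) - (k+1) = n - k := by omega
  rw [pqBasis_one, pqBasis_one, h1]
  unfold pqChoose
  rw [h1, pqFactorial_succ 1 q n, pqFactorial_succ 1 q k]
  have n1 := (pqFactorial_one_pos hq k).ne'
  have n2 := (pqFactorial_one_pos hq (n-k)).ne'
  have n4 := (pqInt_one_pos hq (k.succ_pos)).ne'
  field_simp
  ring

lemma pqBasis_sum_int {q : ℝ} (hq : 0 < q) (n : ℕ) (x : ℝ) :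
    ∑ k ∈ Finset.range (n+1), pqBasis 1 q n k x * pqInt 1 q k
      = pqInt 1 q n * x := by
  cases n with
  | zero => simp [pqInt]
  | succ n =>
    rw [Finset.sum_range_succ' (fun k => pqBasis 1 q (n+1) k x * pqInt 1 q k)]
    have h0 : pqInt 1 q 0 = 0 := by simp [pqInt]
    rw [h0, mul_zero, add_zero]
    have : ∀ k ∈ Finset.range (n+1), pqBasis 1 q (n+1) (k+1) x * pqInt 1 q (k+1)
        = pqInt 1 q (n+1) * x * pqBasis 1 q n k x := by
      intro k hk
      exact pqBasis_mul_int hq (Nat.le_of_lt_succ (Finset.mem_range.mp hk)) x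
    rw [Finset.sum_congr rfl this, ← Finset.mul_sum, pqBasis_sum_one hq n x, mul_one]

lemma geom_one_sub (q : ℝ) (k : ℕ) : (1 - q) * pqInt 1 q k = 1 - q ^ k := by
  rw [pqInt_one_eq]
  have := geom_sum_mul q k
  linarith [this]

lemma pqBasis_sum_pow {q : ℝ} (hq : 0 < q) (n : ℕ) (x : ℝ) :
    ∑ k ∈ Finset.range (n+1), pqBasis 1 q n k x * q ^ k
      = 1 - (1 - q ^ n) * x := by
  have h : ∀ k ∈ Finset.range (n+1), pqBasis 1 q n k x * q ^ k
      = pqBasis 1 q n k x - (1-q) * (pqBasis 1 q n k x * pqInt 1 q k) := by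
    intro k _
    linear_combination pqBasis 1 q n k x * geom_one_sub q k
  rw [Finset.sum_congr rfl h, Finset.sum_sub_distrib, ← Finset.mul_sum,
    pqBasis_sum_one hq n x, pqBasis_sum_int hq n x]
  linear_combination (-x) * geom_one_sub q n

lemma pqBasis_sum_int_sq {q : ℝ} (hq : 0 < q) (n : ℕ) (x : ℝ) :
    ∑ k ∈ Finset.range (n+1+1), pqBasis 1 q (n+1) k x * (pqInt 1 q k)^2
      = (pqInt 1 q (n+1))^2 * x^2 + pqInt 1 q (n+1) * (x - x^2) := by
  rw [Finset.sum_range_succ' (fun k => pqBasis 1 q (n+1) k x * (pqInt 1 q k)^2)]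
  have h0 : pqInt 1 q 0 = 0 := by simp [pqInt]
  rw [h0]
  have : ∀ k ∈ Finset.range (n+1), pqBasis 1 q (n+1) (k+1) x * (pqInt 1 q (k+1))^2
      = pqInt 1 q (n+1) * x * (pqBasis 1 q n k x * pqInt 1 q k
          + pqBasis 1 q n k x * q ^ k) := by
    intro k hk
    have hb := pqBasis_mul_int hq (Nat.le_of_lt_succ (Finset.mem_range.mp hk)) x
    have hs := pqInt_one_succ q k
    linear_combination pqInt 1 q (k+1) * hb + (pqInt 1 q (n+1) * x * pqBasis 1 q n k x) * hs
  rw [Finset.sum_congr rfl this, ← Finset.mul_sum, Finset.sum_add_distrib,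
    pqBasis_sum_int hq n x, pqBasis_sum_pow hq n x]
  linear_combination (-(pqInt 1 q (n+1)) * x^2) * pqInt_one_succ q n

lemma pqNode_one (q : ℝ) (n k : ℕ) : pqNode 1 q n k = pqInt 1 q k / pqInt 1 q n := by
  simp [pqNode]

lemma pqBasis_second_moment {q : ℝ} (hq : 0 < q) {n : ℕ} (hn : 1 ≤ n) (x : ℝ) :
    ∑ k ∈ Finset.range (n+1), pqBasis 1 q n k x * (pqNode 1 q n k - x)^2
      = (x - x^2) / pqInt 1 q n := by
  obtain ⟨m, rfl⟩ : ∃ m, n = m + 1 := ⟨n-1, by omega⟩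
  have hN : (0:ℝ) < pqInt 1 q (m+1) := pqInt_one_pos hq m.succ_pos
  have hterm : ∀ k ∈ Finset.range (m+1+1),
      pqBasis 1 q (m+1) k x * (pqNode 1 q (m+1) k - x)^2
      = (1/(pqInt 1 q (m+1))^2) * (pqBasis 1 q (m+1) k x * (pqInt 1 q k)^2)
        - (2*x/pqInt 1 q (m+1)) * (pqBasis 1 q (m+1) k x * pqInt 1 q k)
        + x^2 * pqBasis 1 q (m+1) k x := by
    intro k _
    rw [pqNode_one]
    field_simp
    ring
  rw [Finset.sum_congr rfl hterm, Finset.sum_add_distrib, Finset.sum_sub_distrib,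
    ← Finset.mul_sum, ← Finset.mul_sum, ← Finset.mul_sum,
    pqBasis_sum_int_sq hq m x, pqBasis_sum_int hq (m+1) x, pqBasis_sum_one hq (m+1) x]
  field_simp
  ring

lemma pqBasis_nonneg {q : ℝ} (hq : 0 < q) (hq1 : q ≤ 1) (n k : ℕ) {x : ℝ}
    (hx : x ∈ Set.Icc (0:ℝ) 1) : 0 ≤ pqBasis 1 q n k x := by
  rw [pqBasis_one]
  obtain ⟨hx0, hx1⟩ := hx
  have h1 : (0:ℝ) ≤ pqChoose 1 q n k := (pqChoose_one_pos hq n k).le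
  have h2 : (0:ℝ) ≤ x ^ k := pow_nonneg hx0 k
  have h3 : (0:ℝ) ≤ ∏ s ∈ Finset.range (n-k), (1 - q^s * x) := by
    apply Finset.prod_nonneg
    intro s _
    have : q ^ s ≤ 1 := pow_le_one₀ hq.le hq1
    nlinarith
  positivity

lemma pqInt_one_mono {q : ℝ} (hq : 0 < q) {k n : ℕ} (hk : k ≤ n) :
    pqInt 1 q k ≤ pqInt 1 q n := by
  rw [pqInt_one_eq, pqInt_one_eq]
  exact Finset.sum_le_sum_of_subset_of_nonneg
    (Finset.range_subset_range.mpr hk) (fun i _ _ => (pow_pos hq i).le)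

lemma pqInt_one_nonneg {q : ℝ} (hq : 0 < q) (k : ℕ) : 0 ≤ pqInt 1 q k := by
  rw [pqInt_one_eq]
  exact Finset.sum_nonneg (fun i _ => (pow_pos hq i).le)

lemma pqNode_mem {q : ℝ} (hq : 0 < q) {n k : ℕ} (hn : 1 ≤ n) (hk : k ≤ n) :
    pqNode 1 q n k ∈ Set.Icc (0:ℝ) 1 := by
  rw [pqNode_one]
  have hN := pqInt_one_pos hq (by omega : 0 < n)
  constructor
  · exact div_nonneg (pqInt_one_nonneg hq k) hN.le
  · rw [div_le_one hN]
    exact pqInt_one_mono hq hk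

lemma sum_range_id_choose (n : ℕ) : ∑ i ∈ Finset.range n, i = n.choose 2 := by
  have h1 := Finset.sum_range_id_mul_two n
  have h2 : n.choose 2 = n * (n-1) / 2 := Nat.choose_two_right n
  omega

lemma choose_two_add (a b : ℕ) : (a+b).choose 2 = a.choose 2 + b.choose 2 + a*b := by
  induction b with
  | zero => simp
  | succ b ih =>
    have h1 : (a+(b+1)) = (a+b)+1 := by omega
    rw [h1, Nat.choose_succ_succ, ih, Nat.choose_succ_succ b 1]
    simp [Nat.choose_one_right, Nat.mul_succ]
    omega

lemma pqInt_scale {p q : ℝ} (hp : 0 < p) (n : ℕ) :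
    pqInt p q n = p^(n-1) * pqInt 1 (q/p) n := by
  rw [pqInt_one_eq, Finset.mul_sum]
  unfold pqInt
  apply Finset.sum_congr rfl
  intro i hi
  have hi' : i ≤ n - 1 := by have := Finset.mem_range.mp hi; omega
  rw [div_pow, pow_sub₀ p hp.ne' hi']
  ring

lemma pqFactorial_scale {p q : ℝ} (hp : 0 < p) (n : ℕ) :
    pqFactorial p q n = p^(n.choose 2) * pqFactorial 1 (q/p) n := by
  unfold pqFactorial
  have h : ∀ j ∈ Finset.range n, pqInt p q (j+1) = p^j * pqInt 1 (q/p) (j+1) := by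
    intro j _
    rw [pqInt_scale hp]
    simp
  rw [Finset.prod_congr rfl h, Finset.prod_mul_distrib, Finset.prod_pow_eq_pow_sum,
    sum_range_id_choose]

lemma pqChoose_scale {p q : ℝ} (hp : 0 < p) (hq : 0 < q) (hqp : q < p) {n k : ℕ}
    (hk : k ≤ n) : pqChoose p q n k = p^(k*(n-k)) * pqChoose 1 (q/p) n k := by
  obtain ⟨d, rfl⟩ : ∃ d, n = k + d := ⟨n-k, by omega⟩
  have hd : k + d - k = d := by omega
  have ht : 0 < q / p := div_pos hq hp
  unfold pqChoose
  rw [hd, pqFactorial_scale hp (k+d), pqFactorial_scale hp k, pqFactorial_scale hp d,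
    choose_two_add]
  have n1 := (pqFactorial_one_pos ht k).ne'
  have n2 := (pqFactorial_one_pos ht d).ne'
  have n3 : p ≠ 0 := hp.ne'
  field_simp
  ring

lemma pqBasis_scale {p q : ℝ} (hp : 0 < p) (hq : 0 < q) (hqp : q < p) {n k : ℕ}
    (hk : k ≤ n) (x : ℝ) : pqBasis p q n k x = pqBasis 1 (q/p) n k x := by
  obtain ⟨d, rfl⟩ : ∃ d, n = k + d := ⟨n-k, by omega⟩
  have hd : k + d - k = d := by omega
  have ht : 0 < q / p := div_pos hq hp
  have hprod : ∏ s ∈ Finset.range d, (p ^ s - q ^ s * x)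
      = p^(d.choose 2) * ∏ s ∈ Finset.range d, (1 - (q/p)^s * x) := by
    rw [← sum_range_id_choose, ← Finset.prod_pow_eq_pow_sum, ← Finset.prod_mul_distrib]
    apply Finset.prod_congr rfl
    intro s _
    rw [div_pow]
    field_simp
  rw [pqBasis_one]
  unfold pqBasis
  rw [hd, hprod, pqChoose_scale hp hq hqp (by omega : k ≤ k + d), hd, choose_two_add]
  have n3 : p ≠ 0 := hp.ne'
  field_simp
  rw [pow_add, pow_add]
  ring

lemma pqNode_scale {p q : ℝ} (hp : 0 < p) {n k : ℕ} (hk : k ≤ n) :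
    pqNode p q n k = pqNode 1 (q/p) n k := by
  cases k with
  | zero => simp [pqNode, pqInt]
  | succ j =>
    unfold pqNode
    rw [pqInt_scale hp (j+1), pqInt_scale hp n]
    have h1 : n - (j+1) + j = n - 1 := by omega
    rw [one_pow, ← mul_assoc, ← pow_add]
    simp only [Nat.add_sub_cancel]
    rw [h1, mul_div_mul_left _ _ (pow_ne_zero (n-1) hp.ne'), one_mul]

lemma pqMoment_scale {p q : ℝ} (hp : 0 < p) (n : ℕ) :
    p^(n-1) / pqInt p q n = 1 / pqInt 1 (q/p) n := by
  rw [pqInt_scale hp n]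
  exact by rw [div_mul_cancel_left₀ (pow_ne_zero (n-1) hp.ne'), one_div]

lemma completeModulus_bddAbove (f : ℝ → ℝ → ℝ)
    (hf : ContinuousOn (fun z : ℝ × ℝ => f z.1 z.2)
      (Set.Icc (0 : ℝ) 1 ×ˢ Set.Icc (0 : ℝ) 1)) (δ : ℝ) :
    BddAbove {d : ℝ | ∃ t ∈ Set.Icc (0 : ℝ) 1, ∃ s ∈ Set.Icc (0 : ℝ) 1,
      ∃ x ∈ Set.Icc (0 : ℝ) 1, ∃ y ∈ Set.Icc (0 : ℝ) 1,
      Real.sqrt ((t - x) ^ 2 + (s - y) ^ 2) ≤ δ ∧ d = |f t s - f x y|} := by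
  obtain ⟨C, hC⟩ := (isCompact_Icc.prod isCompact_Icc).exists_bound_of_continuousOn hf
  refine ⟨2*C, ?_⟩
  rintro d ⟨t, ht, s, hs, a, ha, b, hb, -, rfl⟩
  have h1 := hC (t, s) ⟨ht, hs⟩
  have h2 := hC (a, b) ⟨ha, hb⟩
  simp only [Real.norm_eq_abs] at h1 h2
  have h3 : |f t s - f a b| ≤ |f t s| + |f a b| := abs_sub _ _
  linarith

lemma le_completeModulus (f : ℝ → ℝ → ℝ)
    (hf : ContinuousOn (fun z : ℝ × ℝ => f z.1 z.2)
      (Set.Icc (0 : ℝ) 1 ×ˢ Set.Icc (0 : ℝ) 1)) {δ t s a b : ℝ}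
    (ht : t ∈ Set.Icc (0:ℝ) 1) (hs : s ∈ Set.Icc (0:ℝ) 1)
    (ha : a ∈ Set.Icc (0:ℝ) 1) (hb : b ∈ Set.Icc (0:ℝ) 1)
    (hd : Real.sqrt ((t - a) ^ 2 + (s - b) ^ 2) ≤ δ) :
    |f t s - f a b| ≤ completeModulus f δ :=
  le_csSup (completeModulus_bddAbove f hf δ) ⟨t, ht, s, hs, a, ha, b, hb, hd, rfl⟩

lemma completeModulus_nonneg (f : ℝ → ℝ → ℝ)
    (hf : ContinuousOn (fun z : ℝ × ℝ => f z.1 z.2)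
      (Set.Icc (0 : ℝ) 1 ×ˢ Set.Icc (0 : ℝ) 1)) {δ : ℝ} (hδ : 0 ≤ δ) :
    0 ≤ completeModulus f δ := by
  have h0 : (0:ℝ) ∈ Set.Icc (0:ℝ) 1 := by norm_num
  have h := le_completeModulus f hf h0 h0 h0 h0 (δ := δ) (by simpa using hδ)
  simpa using h

lemma icc_convex_pt {u v t : ℝ} (hu : u ∈ Set.Icc (0:ℝ) 1) (hv : v ∈ Set.Icc (0:ℝ) 1)
    (ht0 : 0 ≤ t) (ht1 : t ≤ 1) : u + t * (v - u) ∈ Set.Icc (0:ℝ) 1 := by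
  obtain ⟨h1, h2⟩ := hu; obtain ⟨h3, h4⟩ := hv
  constructor <;> nlinarith

lemma chain_bound (f : ℝ → ℝ → ℝ)
    (hf : ContinuousOn (fun z : ℝ × ℝ => f z.1 z.2)
      (Set.Icc (0 : ℝ) 1 ×ˢ Set.Icc (0 : ℝ) 1)) {δ : ℝ} (hδ : 0 ≤ δ)
    {N : ℕ} (hN : 1 ≤ N) {a₁ a₂ b₁ b₂ : ℝ}
    (ha₁ : a₁ ∈ Set.Icc (0:ℝ) 1) (ha₂ : a₂ ∈ Set.Icc (0:ℝ) 1)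
    (hb₁ : b₁ ∈ Set.Icc (0:ℝ) 1) (hb₂ : b₂ ∈ Set.Icc (0:ℝ) 1)
    (hd : Real.sqrt ((a₁ - b₁) ^ 2 + (a₂ - b₂) ^ 2) ≤ N * δ) :
    |f a₁ a₂ - f b₁ b₂| ≤ N * completeModulus f δ := by
  set g₁ : ℕ → ℝ := fun i => b₁ + ((i:ℝ)/N) * (a₁ - b₁) with hg₁
  set g₂ : ℕ → ℝ := fun i => b₂ + ((i:ℝ)/N) * (a₂ - b₂) with hg₂
  have hNR : (0:ℝ) < N := by exact_mod_cast hN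
  have hmem : ∀ i ≤ N, g₁ i ∈ Set.Icc (0:ℝ) 1 ∧ g₂ i ∈ Set.Icc (0:ℝ) 1 := by
    intro i hi
    have h0 : (0:ℝ) ≤ (i:ℝ)/N := by positivity
    have h1 : (i:ℝ)/N ≤ 1 := by
      rw [div_le_one hNR]; exact_mod_cast hi
    exact ⟨icc_convex_pt hb₁ ha₁ h0 h1, icc_convex_pt hb₂ ha₂ h0 h1⟩
  have hend1 : g₁ N = a₁ := by simp [hg₁, div_self hNR.ne']
  have hend2 : g₂ N = a₂ := by simp [hg₂, div_self hNR.ne']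
  have hstart1 : g₁ 0 = b₁ := by simp [hg₁]
  have hstart2 : g₂ 0 = b₂ := by simp [hg₂]
  have htel : f a₁ a₂ - f b₁ b₂ = ∑ i ∈ Finset.range N, (f (g₁ (i+1)) (g₂ (i+1)) - f (g₁ i) (g₂ i)) := by
    rw [Finset.sum_range_sub (fun i => f (g₁ i) (g₂ i)), hend1, hend2, hstart1, hstart2]
  have hE : (a₁ - b₁)^2 + (a₂ - b₂)^2 ≤ (N*δ)^2 := by
    have h0 : (0:ℝ) ≤ (a₁-b₁)^2 + (a₂-b₂)^2 := by positivity
    nlinarith [Real.sq_sqrt h0, Real.sqrt_nonneg ((a₁-b₁)^2+(a₂-b₂)^2)]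
  have hstep : ∀ i ∈ Finset.range N, |f (g₁ (i+1)) (g₂ (i+1)) - f (g₁ i) (g₂ i)|
      ≤ completeModulus f δ := by
    intro i hi
    have hi' := Finset.mem_range.mp hi
    have hm1 := hmem (i+1) (by omega)
    have hm0 := hmem i (by omega)
    apply le_completeModulus f hf hm1.1 hm1.2 hm0.1 hm0.2
    have e1 : g₁ (i+1) - g₁ i = (a₁ - b₁)/N := by
      simp only [hg₁]; push_cast; field_simp; ring
    have e2 : g₂ (i+1) - g₂ i = (a₂ - b₂)/N := by
      simp only [hg₂]; push_cast; field_simp; ring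
    rw [e1, e2]
    have harg : ((a₁-b₁)/N)^2 + ((a₂-b₂)/N)^2 ≤ δ^2 := by
      rw [div_pow, div_pow]
      rw [← add_div, div_le_iff₀ (by positivity)]
      nlinarith [hE]
    calc Real.sqrt (((a₁-b₁)/N)^2 + ((a₂-b₂)/N)^2)
        ≤ Real.sqrt (δ^2) := Real.sqrt_le_sqrt harg
      _ = δ := Real.sqrt_sq hδ
  calc |f a₁ a₂ - f b₁ b₂| ≤ ∑ i ∈ Finset.range N, |f (g₁ (i+1)) (g₂ (i+1)) - f (g₁ i) (g₂ i)| := by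
        rw [htel]; exact Finset.abs_sum_le_sum_abs _ _
    _ ≤ ∑ i ∈ Finset.range N, completeModulus f δ := Finset.sum_le_sum hstep
    _ = N * completeModulus f δ := by rw [Finset.sum_const, Finset.card_range, nsmul_eq_mul]

lemma node_pt_bound (f : ℝ → ℝ → ℝ)
    (hf : ContinuousOn (fun z : ℝ × ℝ => f z.1 z.2)
      (Set.Icc (0 : ℝ) 1 ×ˢ Set.Icc (0 : ℝ) 1)) {δ : ℝ} (hδ : 0 < δ)
    {a₁ a₂ b₁ b₂ : ℝ}
    (ha₁ : a₁ ∈ Set.Icc (0:ℝ) 1) (ha₂ : a₂ ∈ Set.Icc (0:ℝ) 1)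
    (hb₁ : b₁ ∈ Set.Icc (0:ℝ) 1) (hb₂ : b₂ ∈ Set.Icc (0:ℝ) 1) :
    |f a₁ a₂ - f b₁ b₂| ≤
      (1 + Real.sqrt ((a₁ - b₁) ^ 2 + (a₂ - b₂) ^ 2) / δ) * completeModulus f δ := by
  set d := Real.sqrt ((a₁ - b₁) ^ 2 + (a₂ - b₂) ^ 2) with hddef
  have hd0 : 0 ≤ d := Real.sqrt_nonneg _
  set N : ℕ := max ⌈d/δ⌉₊ 1 with hNdef
  have hN1 : 1 ≤ N := le_max_right _ _
  have hdN : d ≤ N * δ := by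
    have h1 : d/δ ≤ (⌈d/δ⌉₊ : ℝ) := Nat.le_ceil _
    have h2 : (⌈d/δ⌉₊:ℝ) ≤ (N:ℝ) := by exact_mod_cast Nat.le_max_left _ _
    calc d = (d/δ) * δ := by field_simp
      _ ≤ (N:ℝ) * δ := by nlinarith
  have hNle : (N:ℝ) ≤ 1 + d/δ := by
    rcases Nat.eq_zero_or_pos ⌈d/δ⌉₊ with h | h
    · have : N = 1 := by omega
      rw [this]
      have : 0 ≤ d/δ := by positivity
      push_cast; linarith
    · have hN : N = ⌈d/δ⌉₊ := by omega
      rw [hN]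
      have := Nat.ceil_lt_add_one (show (0:ℝ) ≤ d/δ by positivity)
      linarith
  have h := chain_bound f hf hδ.le hN1 ha₁ ha₂ hb₁ hb₂ (by rw [← hddef]; exact hdN)
  have hω := completeModulus_nonneg f hf hδ.le
  calc |f a₁ a₂ - f b₁ b₂| ≤ N * completeModulus f δ := h
    _ ≤ (1 + d/δ) * completeModulus f δ := by nlinarith

theorem pqBernstein2_rate_complete_modulus (p₁ q₁ p₂ q₂ : ℝ) (n m : ℕ)
    (hq₁ : 0 < q₁) (hq₁p₁ : q₁ < p₁) (hp₁ : p₁ ≤ 1)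
    (hq₂ : 0 < q₂) (hq₂p₂ : q₂ < p₂) (hp₂ : p₂ ≤ 1)
    (hn : 1 ≤ n) (hm : 1 ≤ m)
    (f : ℝ → ℝ → ℝ)
    (hf : ContinuousOn (fun z : ℝ × ℝ => f z.1 z.2)
      (Set.Icc (0 : ℝ) 1 ×ˢ Set.Icc (0 : ℝ) 1))
    (x y : ℝ) (hx : x ∈ Set.Icc (0 : ℝ) 1) (hy : y ∈ Set.Icc (0 : ℝ) 1) :
    |pqBernstein2 p₁ q₁ p₂ q₂ n m f x y - f x y| ≤
      2 * completeModulus f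
        (Real.sqrt ((p₁ ^ (n - 1) / pqInt p₁ q₁ n) * (x - x ^ 2) +
          (p₂ ^ (m - 1) / pqInt p₂ q₂ m) * (y - y ^ 2))) := by
  have hp₁0 : 0 < p₁ := hq₁.trans hq₁p₁
  have hp₂0 : 0 < p₂ := hq₂.trans hq₂p₂
  set t₁ := q₁ / p₁ with ht₁def
  set t₂ := q₂ / p₂ with ht₂def
  have ht₁ : 0 < t₁ := div_pos hq₁ hp₁0
  have ht₂ : 0 < t₂ := div_pos hq₂ hp₂0
  have ht₁1 : t₁ < 1 := (div_lt_one hp₁0).mpr hq₁p₁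
  have ht₂1 : t₂ < 1 := (div_lt_one hp₂0).mpr hq₂p₂
  have hN₁ : 0 < pqInt 1 t₁ n := pqInt_one_pos ht₁ (by omega)
  have hN₂ : 0 < pqInt 1 t₂ m := pqInt_one_pos ht₂ (by omega)
  have hδarg : (p₁ ^ (n - 1) / pqInt p₁ q₁ n) * (x - x ^ 2) +
      (p₂ ^ (m - 1) / pqInt p₂ q₂ m) * (y - y ^ 2)
      = (x - x^2)/pqInt 1 t₁ n + (y - y^2)/pqInt 1 t₂ m := by
    rw [pqMoment_scale hp₁0, pqMoment_scale hp₂0]; ring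
  rw [hδarg]
  set E := (x - x^2)/pqInt 1 t₁ n + (y - y^2)/pqInt 1 t₂ m with hEdef
  set δ := Real.sqrt E with hδdef
  have hx2 : 0 ≤ x - x^2 := by nlinarith [hx.1, hx.2]
  have hy2 : 0 ≤ y - y^2 := by nlinarith [hy.1, hy.2]
  have hE0 : 0 ≤ E := by positivity
  have hδ0 : 0 ≤ δ := Real.sqrt_nonneg _
  have hω0 : 0 ≤ completeModulus f δ := completeModulus_nonneg f hf hδ0
  set b₁ : ℕ → ℝ := fun k => pqBasis 1 t₁ n k x with hb₁def
  set b₂ : ℕ → ℝ := fun j => pqBasis 1 t₂ m j y with hb₂def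
  set u : ℕ → ℝ := fun k => pqNode 1 t₁ n k with hudef
  set v : ℕ → ℝ := fun j => pqNode 1 t₂ m j with hvdef
  set P : Finset (ℕ × ℕ) := Finset.range (n+1) ×ˢ Finset.range (m+1) with hPdef
  -- rewrite the operator as a sum over P
  have hB : pqBernstein2 p₁ q₁ p₂ q₂ n m f x y
      = ∑ z ∈ P, b₁ z.1 * b₂ z.2 * f (u z.1) (v z.2) := by
    rw [hPdef, Finset.sum_product]
    unfold pqBernstein2
    apply Finset.sum_congr rfl; intro k hk
    apply Finset.sum_congr rfl; intro j hj
    have hk' : k ≤ n := by have := Finset.mem_range.mp hk; omega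
    have hj' : j ≤ m := by have := Finset.mem_range.mp hj; omega
    rw [hb₁def, hb₂def, hudef, hvdef]
    simp only
    rw [pqBasis_scale hp₁0 hq₁ hq₁p₁ hk' x, pqBasis_scale hp₂0 hq₂ hq₂p₂ hj' y,
      pqNode_scale hp₁0 hk', pqNode_scale hp₂0 hj']
  have hb₁nn : ∀ k, 0 ≤ b₁ k := fun k => pqBasis_nonneg ht₁ ht₁1.le n k hx
  have hb₂nn : ∀ j, 0 ≤ b₂ j := fun j => pqBasis_nonneg ht₂ ht₂1.le m j hy
  have hsum₁ : ∑ k ∈ Finset.range (n+1), b₁ k = 1 := pqBasis_sum_one ht₁ n x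
  have hsum₂ : ∑ j ∈ Finset.range (m+1), b₂ j = 1 := pqBasis_sum_one ht₂ m y
  have hmom₁ : ∑ k ∈ Finset.range (n+1), b₁ k * (u k - x)^2 = (x - x^2)/pqInt 1 t₁ n :=
    pqBasis_second_moment ht₁ hn x
  have hmom₂ : ∑ j ∈ Finset.range (m+1), b₂ j * (v j - y)^2 = (y - y^2)/pqInt 1 t₂ m :=
    pqBasis_second_moment ht₂ hm y
  have hu : ∀ k ≤ n, u k ∈ Set.Icc (0:ℝ) 1 := fun k hk => pqNode_mem ht₁ hn hk
  have hv : ∀ j ≤ m, v j ∈ Set.Icc (0:ℝ) 1 := fun j hj => pqNode_mem ht₂ hm hj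
  have hzmem : ∀ z ∈ P, z.1 ≤ n ∧ z.2 ≤ m := by
    intro z hz
    rw [hPdef, Finset.mem_product] at hz
    constructor
    · have := Finset.mem_range.mp hz.1; omega
    · have := Finset.mem_range.mp hz.2; omega
  -- sum of weights is 1
  have hPsum : ∑ z ∈ P, b₁ z.1 * b₂ z.2 = 1 := by
    rw [hPdef, Finset.sum_product]
    calc ∑ k ∈ Finset.range (n+1), ∑ j ∈ Finset.range (m+1), b₁ k * b₂ j
        = ∑ k ∈ Finset.range (n+1), b₁ k * ∑ j ∈ Finset.range (m+1), b₂ j := by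
          exact Finset.sum_congr rfl fun k _ => (Finset.mul_sum _ _ _).symm
      _ = 1 := by rw [hsum₂]; simpa using hsum₁
  -- second moment over P
  have hP2 : ∑ z ∈ P, b₁ z.1 * b₂ z.2 * ((u z.1 - x)^2 + (v z.2 - y)^2) = E := by
    rw [hPdef, Finset.sum_product]
    have inner : ∀ k ∈ Finset.range (n+1),
        ∑ j ∈ Finset.range (m+1), b₁ k * b₂ j * ((u k - x)^2 + (v j - y)^2)
        = b₁ k * (u k - x)^2 + b₁ k * ((y - y^2)/pqInt 1 t₂ m) := by
      intro k _
      have e : ∀ j ∈ Finset.range (m+1), b₁ k * b₂ j * ((u k - x)^2 + (v j - y)^2)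
          = (b₁ k * (u k - x)^2) * b₂ j + b₁ k * (b₂ j * (v j - y)^2) :=
        fun j _ => by ring
      rw [Finset.sum_congr rfl e, Finset.sum_add_distrib, ← Finset.mul_sum, ← Finset.mul_sum,
        hsum₂, hmom₂, mul_one]
    rw [Finset.sum_congr rfl inner, Finset.sum_add_distrib, ← Finset.sum_mul, hsum₁, hmom₁,
      one_mul]
  -- difference form
  have hdiff : pqBernstein2 p₁ q₁ p₂ q₂ n m f x y - f x y
      = ∑ z ∈ P, b₁ z.1 * b₂ z.2 * (f (u z.1) (v z.2) - f x y) := by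
    have e : ∀ z ∈ P, b₁ z.1 * b₂ z.2 * (f (u z.1) (v z.2) - f x y)
        = b₁ z.1 * b₂ z.2 * f (u z.1) (v z.2) - b₁ z.1 * b₂ z.2 * f x y :=
      fun z _ => by ring
    rw [Finset.sum_congr rfl e, Finset.sum_sub_distrib, ← Finset.sum_mul, hPsum, one_mul, hB]
  rw [hdiff]
  have habs : |∑ z ∈ P, b₁ z.1 * b₂ z.2 * (f (u z.1) (v z.2) - f x y)|
      ≤ ∑ z ∈ P, b₁ z.1 * b₂ z.2 * |f (u z.1) (v z.2) - f x y| := by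
    refine (Finset.abs_sum_le_sum_abs _ _).trans (le_of_eq ?_)
    refine Finset.sum_congr rfl fun z _ => ?_
    rw [abs_mul, abs_of_nonneg (mul_nonneg (hb₁nn z.1) (hb₂nn z.2))]
  rcases eq_or_lt_of_le hE0 with hEzero | hEpos
  · -- degenerate case: E = 0
    have hδz : δ = 0 := by rw [hδdef, ← hEzero, Real.sqrt_zero]
    have hmx : ∑ k ∈ Finset.range (n+1), b₁ k * (u k - x)^2 = 0 := by
      rw [hmom₁]
      have h1 : 0 ≤ (x - x^2)/pqInt 1 t₁ n := by positivity
      have h2 : 0 ≤ (y - y^2)/pqInt 1 t₂ m := by positivity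
      rw [hEdef] at hEzero
      linarith
    have hmy : ∑ j ∈ Finset.range (m+1), b₂ j * (v j - y)^2 = 0 := by
      rw [hmom₂]
      have h1 : 0 ≤ (x - x^2)/pqInt 1 t₁ n := by positivity
      have h2 : 0 ≤ (y - y^2)/pqInt 1 t₂ m := by positivity
      rw [hEdef] at hEzero
      linarith
    have hxall : ∀ k ∈ Finset.range (n+1), b₁ k * (u k - x)^2 = 0 := by
      intro k hk
      have := (Finset.sum_eq_zero_iff_of_nonneg
        (fun k _ => mul_nonneg (hb₁nn k) (sq_nonneg _))).mp hmx
      exact this k hk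
    have hyall : ∀ j ∈ Finset.range (m+1), b₂ j * (v j - y)^2 = 0 := by
      intro j hj
      have := (Finset.sum_eq_zero_iff_of_nonneg
        (fun j _ => mul_nonneg (hb₂nn j) (sq_nonneg _))).mp hmy
      exact this j hj
    have hterm : ∀ z ∈ P, b₁ z.1 * b₂ z.2 * |f (u z.1) (v z.2) - f x y| = 0 := by
      intro z hz
      rw [hPdef, Finset.mem_product] at hz
      have h1 := hxall z.1 hz.1
      have h2 := hyall z.2 hz.2
      rcases mul_eq_zero.mp h1 with h | h
      · rw [h]; ring
      · rcases mul_eq_zero.mp h2 with h' | h'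
        · rw [h']; ring
        · have hux : u z.1 = x := by
            have h0 : u z.1 - x = 0 := by
              exact pow_eq_zero_iff (by norm_num : (2:ℕ) ≠ 0) |>.mp h
            linarith
          have hvy : v z.2 = y := by
            have h0 : v z.2 - y = 0 := by
              exact pow_eq_zero_iff (by norm_num : (2:ℕ) ≠ 0) |>.mp h'
            linarith
          rw [hux, hvy, sub_self, abs_zero, mul_zero]
    calc |∑ z ∈ P, b₁ z.1 * b₂ z.2 * (f (u z.1) (v z.2) - f x y)|
        ≤ ∑ z ∈ P, b₁ z.1 * b₂ z.2 * |f (u z.1) (v z.2) - f x y| := habs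
      _ = 0 := Finset.sum_eq_zero hterm
      _ ≤ 2 * completeModulus f δ := by linarith [hω0]
  · -- main case: E > 0
    have hδpos : 0 < δ := Real.sqrt_pos.mpr hEpos
    set D : ℕ × ℕ → ℝ := fun z => Real.sqrt ((u z.1 - x)^2 + (v z.2 - y)^2) with hDdef
    set S := ∑ z ∈ P, b₁ z.1 * b₂ z.2 * D z with hSdef
    have hDnn : ∀ z, 0 ≤ D z := fun z => Real.sqrt_nonneg _
    have hRnn : ∀ z : ℕ × ℕ, 0 ≤ b₁ z.1 * b₂ z.2 :=
      fun z => mul_nonneg (hb₁nn z.1) (hb₂nn z.2)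
    have hSnn : 0 ≤ S := Finset.sum_nonneg fun z _ => mul_nonneg (hRnn z) (hDnn z)
    -- Cauchy-Schwarz
    have hCS : S^2 ≤ E := by
      have h := Finset.sum_mul_sq_le_sq_mul_sq P
        (fun z => Real.sqrt (b₁ z.1 * b₂ z.2))
        (fun z => Real.sqrt (b₁ z.1 * b₂ z.2) * D z)
      have e1 : ∀ z ∈ P, Real.sqrt (b₁ z.1 * b₂ z.2) * (Real.sqrt (b₁ z.1 * b₂ z.2) * D z)
          = b₁ z.1 * b₂ z.2 * D z := by
        intro z _
        rw [← mul_assoc, Real.mul_self_sqrt (hRnn z)]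
      have e2 : ∀ z ∈ P, Real.sqrt (b₁ z.1 * b₂ z.2) ^ 2 = b₁ z.1 * b₂ z.2 := by
        intro z _
        rw [Real.sq_sqrt (hRnn z)]
      have e3 : ∀ z ∈ P, (Real.sqrt (b₁ z.1 * b₂ z.2) * D z) ^ 2
          = b₁ z.1 * b₂ z.2 * ((u z.1 - x)^2 + (v z.2 - y)^2) := by
        intro z _
        rw [mul_pow, Real.sq_sqrt (hRnn z), hDdef]
        rw [Real.sq_sqrt (by positivity)]
      rw [Finset.sum_congr rfl e1, Finset.sum_congr rfl e2, Finset.sum_congr rfl e3,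
        hPsum, hP2, one_mul] at h
      exact h
    have hSδ : S ≤ δ := by
      rw [hδdef]
      calc S = Real.sqrt (S^2) := (Real.sqrt_sq hSnn).symm
        _ ≤ Real.sqrt E := Real.sqrt_le_sqrt hCS
    -- per-term bound
    have hterm : ∀ z ∈ P, b₁ z.1 * b₂ z.2 * |f (u z.1) (v z.2) - f x y|
        ≤ b₁ z.1 * b₂ z.2 * completeModulus f δ
          + (b₁ z.1 * b₂ z.2 * D z) * (completeModulus f δ / δ) := by
      intro z hz
      obtain ⟨hz1, hz2⟩ := hzmem z hz
      have hb := node_pt_bound f hf hδpos (hu z.1 hz1) (hv z.2 hz2) hx hy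
      have h1 : b₁ z.1 * b₂ z.2 * |f (u z.1) (v z.2) - f x y|
          ≤ b₁ z.1 * b₂ z.2 * ((1 + D z / δ) * completeModulus f δ) :=
        mul_le_mul_of_nonneg_left hb (hRnn z)
      refine h1.trans (le_of_eq ?_)
      field_simp
    calc |∑ z ∈ P, b₁ z.1 * b₂ z.2 * (f (u z.1) (v z.2) - f x y)|
        ≤ ∑ z ∈ P, b₁ z.1 * b₂ z.2 * |f (u z.1) (v z.2) - f x y| := habs
      _ ≤ ∑ z ∈ P, (b₁ z.1 * b₂ z.2 * completeModulus f δ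
            + (b₁ z.1 * b₂ z.2 * D z) * (completeModulus f δ / δ)) :=
          Finset.sum_le_sum hterm
      _ = completeModulus f δ + S * (completeModulus f δ / δ) := by
          rw [Finset.sum_add_distrib, ← Finset.sum_mul, ← Finset.sum_mul, hPsum, one_mul,
            ← hSdef]
      _ ≤ completeModulus f δ + completeModulus f δ := by
          have h1 : S * (completeModulus f δ / δ) ≤ δ * (completeModulus f δ / δ) :=
            mul_le_mul_of_nonneg_right hSδ (by positivity)
          have h2 : δ * (completeModulus f δ / δ) = completeModulus f δ := by
            field_simp
          linarith
      _ = 2 * completeModulus f δ := by ring
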